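/- arXiv:1301.0155 — 3 statements merged into one kernel-verified Lean document; each statement's English description precedes it below -/
import Mathlib

section
/- Let q > 1. For every x > 0, the double inequality ψ_q(1) − ln q − ln(exp((ln q)/(q^x − 1)) − 1) < ψ_q(x) < ln(ln q/(q − 1)) − (ln q)/2 − ln(exp((ln q)/(q^x − 1)) − 1) holds. -/
open Real Set Filter Topology

/-- The q-digamma function for `q > 1`:
`ψ_q(x) = −ln(q−1) + (ln q)·(x − 1/2 − ∑_{k=1}^∞ q^{−kx}/(1 − q^{−k}))`. -/
noncomputable def qDigammaGt (q x : ℝ) : ℝ :=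
  -Real.log (q - 1) +
    Real.log q *
      (x - 1 / 2 - ∑' k : ℕ, q ^ (-(((k : ℝ) + 1) * x)) / (1 - q ^ (-((k : ℝ) + 1))))

namespace QDG

noncomputable def G (y : ℝ) : ℝ := Real.log y - Real.log (1 - Real.exp (-y))
noncomputable def Gd (y : ℝ) : ℝ := y⁻¹ - (Real.exp y - 1)⁻¹

lemma exp_sub_one_pos {y : ℝ} (hy : 0 < y) : 0 < Real.exp y - 1 := by
  have : (1:ℝ) < Real.exp y := by
    calc (1:ℝ) = Real.exp 0 := (Real.exp_zero).symm
    _ < Real.exp y := Real.exp_lt_exp.2 hy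
  linarith

lemma one_sub_exp_neg_pos {y : ℝ} (hy : 0 < y) : 0 < 1 - Real.exp (-y) := by
  have : Real.exp (-y) < Real.exp 0 := Real.exp_lt_exp.2 (by linarith)
  rw [Real.exp_zero] at this; linarith

lemma one_sub_exp_neg_lt {y : ℝ} (hy : 0 < y) : 1 - Real.exp (-y) < y := by
  have := Real.add_one_lt_exp (x := -y) (by linarith)
  linarith

lemma exp_sub_one_gt {y : ℝ} (hy : 0 < y) : y < Real.exp y - 1 := by
  have := Real.add_one_lt_exp (x := y) (by linarith)
  linarith

lemma Gd_pos {y : ℝ} (hy : 0 < y) : 0 < Gd y := by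
  have h1 := exp_sub_one_gt hy
  have h2 : (Real.exp y - 1)⁻¹ < y⁻¹ := by
    apply inv_strictAnti₀ hy h1
  simpa [Gd, sub_pos] using h2

lemma key_ineq {y : ℝ} (hy : 0 < y) : Real.exp y * y ^ 2 < (Real.exp y - 1) ^ 2 := by
  have hs : y / 2 < Real.sinh (y / 2) := Real.self_lt_sinh_iff.2 (by linarith)
  have h1 : Real.exp y - 1 = Real.exp (y / 2) * (2 * Real.sinh (y / 2)) := by
    rw [Real.sinh_eq]
    rw [show Real.exp y = Real.exp (y/2) * Real.exp (y/2) by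
      rw [← Real.exp_add]; ring_nf]
    rw [Real.exp_neg]
    field_simp
  have hE : 0 < Real.exp (y / 2) := Real.exp_pos _
  have h2 : y ^ 2 < (2 * Real.sinh (y / 2)) ^ 2 := by
    have h0 : 0 ≤ y := hy.le
    have : y < 2 * Real.sinh (y / 2) := by linarith
    exact pow_lt_pow_left₀ this h0 (by norm_num)
  calc Real.exp y * y ^ 2 < Real.exp y * (2 * Real.sinh (y / 2)) ^ 2 := by
        exact mul_lt_mul_of_pos_left h2 (Real.exp_pos y)
    _ = (Real.exp y - 1) ^ 2 := by
        have hE2 : Real.exp (y/2) * Real.exp (y/2) = Real.exp y := by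
          rw [← Real.exp_add]; ring_nf
        rw [h1, ← hE2]; ring

lemma hasDerivAt_one_sub_exp_neg (y : ℝ) :
    HasDerivAt (fun x : ℝ => 1 - Real.exp (-x)) (Real.exp (-y)) y := by
  have h := ((Real.hasDerivAt_exp (-y)).comp y (hasDerivAt_neg y))
  have h2 := h.const_sub 1
  simpa using h2

lemma hasDerivAt_G {y : ℝ} (hy : 0 < y) : HasDerivAt G (Gd y) y := by
  have h1 : HasDerivAt Real.log y⁻¹ y := Real.hasDerivAt_log hy.ne'
  have h2 := hasDerivAt_one_sub_exp_neg y
  have h3 : HasDerivAt (fun x : ℝ => Real.log (1 - Real.exp (-x)))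
      ((1 - Real.exp (-y))⁻¹ * Real.exp (-y)) y := by
    have := (Real.hasDerivAt_log (one_sub_exp_neg_pos hy).ne').comp y h2
    simpa [mul_comm, Function.comp_def] using this
  have h4 := h1.sub h3
  refine h4.congr_deriv ?_
  have hne : Real.exp y ≠ 0 := (Real.exp_pos y).ne'
  have hne2 : Real.exp y - 1 ≠ 0 := (exp_sub_one_pos hy).ne'
  unfold Gd
  rw [Real.exp_neg]
  field_simp

lemma hasDerivAt_Gd {y : ℝ} (hy : 0 < y) :
    HasDerivAt Gd (-(y ^ 2)⁻¹ + Real.exp y * ((Real.exp y - 1) ^ 2)⁻¹) y := by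
  have h1 : HasDerivAt (fun x : ℝ => x⁻¹) (-(y ^ 2)⁻¹) y := hasDerivAt_inv hy.ne'
  have h2 : HasDerivAt (fun x : ℝ => (Real.exp x - 1)⁻¹)
      (-((Real.exp y - 1) ^ 2)⁻¹ * Real.exp y) y := by
    have hb : HasDerivAt (fun x : ℝ => Real.exp x - 1) (Real.exp y) y :=
      (Real.hasDerivAt_exp y).sub_const 1
    have := (hasDerivAt_inv (exp_sub_one_pos hy).ne').comp y hb
    simpa [Function.comp_def] using this
  have := h1.sub h2
  refine this.congr_deriv ?_
  ring

lemma Gd_deriv_neg {y : ℝ} (hy : 0 < y) :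
    -(y ^ 2)⁻¹ + Real.exp y * ((Real.exp y - 1) ^ 2)⁻¹ < 0 := by
  have hk := key_ineq hy
  have h1 : (0:ℝ) < y ^ 2 := by positivity
  have h2 : (0:ℝ) < (Real.exp y - 1) ^ 2 := by
    have := exp_sub_one_pos hy; positivity
  have h3 : Real.exp y / (Real.exp y - 1) ^ 2 < 1 / y ^ 2 := by
    rw [div_lt_div_iff₀ h2 h1]; linarith
  rw [div_eq_mul_inv, one_div] at h3
  linarith


lemma Gd_anti : StrictAntiOn Gd (Set.Ioi 0) := by
  apply strictAntiOn_of_deriv_neg (convex_Ioi 0)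
  · intro x hx
    exact (hasDerivAt_Gd hx).continuousAt.continuousWithinAt
  · intro x hx
    rw [interior_Ioi] at hx
    rw [(hasDerivAt_Gd hx).deriv]
    exact Gd_deriv_neg hx

lemma G_zero : G 0 = 0 := by
  simp [G]

lemma G_pos {y : ℝ} (hy : 0 < y) : 0 < G y := by
  have h1 := one_sub_exp_neg_pos hy
  have h2 := one_sub_exp_neg_lt hy
  have := Real.log_lt_log h1 h2
  unfold G; linarith

lemma G_le_half {y : ℝ} (hy : 0 ≤ y) : G y ≤ y / 2 := by
  rcases eq_or_lt_of_le hy with h | h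
  · simp [← h, G_zero]
  have h1 := one_sub_exp_neg_pos h
  -- y / (1 - exp (-y)) ≤ exp (y/2), i.e. y ≤ exp(y/2) (1 - exp (-y)) = 2 sinh (y/2)
  have hs : y / 2 < Real.sinh (y / 2) := Real.self_lt_sinh_iff.2 (by linarith)
  have h2 : y ≤ Real.exp (y / 2) * (1 - Real.exp (-y)) := by
    have hE2 : Real.exp (y/2) * Real.exp (y/2) = Real.exp y := by
      rw [← Real.exp_add]; ring_nf
    have hkey : Real.exp (y / 2) * (1 - Real.exp (-y)) = 2 * Real.sinh (y / 2) := by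
      rw [Real.sinh_eq, Real.exp_neg y, Real.exp_neg (y/2)]
      field_simp
      nlinarith [Real.exp_pos (y/2)]
    rw [hkey]; linarith
  have h3 : Real.log y ≤ Real.log (Real.exp (y / 2) * (1 - Real.exp (-y))) :=
    Real.log_le_log h h2
  rw [Real.log_mul (Real.exp_pos _).ne' h1.ne', Real.log_exp] at h3
  unfold G; linarith

lemma G_mvt {a b : ℝ} (ha : 0 < a) (hab : a < b) :
    ∃ c ∈ Set.Ioo a b, G b - G a = Gd c * (b - a) := by
  obtain ⟨c, hc, hceq⟩ := exists_hasDerivAt_eq_slope G Gd hab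
    (fun x hx => (hasDerivAt_G (lt_of_lt_of_le ha hx.1)).continuousAt.continuousWithinAt)
    (fun x hx => hasDerivAt_G (ha.trans hx.1))
  refine ⟨c, hc, ?_⟩
  rw [hceq, div_mul_cancel₀ _ (sub_ne_zero.2 hab.ne')]

lemma G_tangent {w z : ℝ} (hw : 0 < w) (hz : 0 < z) : G w ≤ G z + Gd z * (w - z) := by
  rcases lt_trichotomy w z with h | h | h
  · obtain ⟨c, hc, hceq⟩ := G_mvt hw h
    have : Gd z < Gd c := Gd_anti (lt_of_lt_of_le hw hc.1.le) hz hc.2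
    nlinarith [sub_pos.2 h]
  · simp [h]
  · obtain ⟨c, hc, hceq⟩ := G_mvt hz h
    have : Gd c < Gd z := Gd_anti hz (hz.trans hc.1) hc.1
    nlinarith [sub_pos.2 h]

lemma G_tendsto_zero : Filter.Tendsto G (nhdsWithin 0 (Set.Ioi 0)) (nhds 0) := by
  have hd := hasDerivAt_one_sub_exp_neg 0
  rw [hasDerivAt_iff_tendsto_slope] at hd
  have hd2 : Filter.Tendsto (slope (fun x : ℝ => 1 - Real.exp (-x)) 0)
      (nhdsWithin 0 (Set.Ioi 0)) (nhds 1) := by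
    simpa using hd.mono_left (nhdsWithin_mono 0 (show Set.Ioi (0:ℝ) ⊆ {0}ᶜ from fun y hy => ne_of_gt hy))
  have h1 : Filter.Tendsto (fun y : ℝ => (1 - Real.exp (-y)) / y)
      (nhdsWithin 0 (Set.Ioi 0)) (nhds 1) := by
    apply hd2.congr'
    filter_upwards [self_mem_nhdsWithin] with y hy
    simp [slope_def_field]
  have h2 : Filter.Tendsto (fun y : ℝ => -Real.log ((1 - Real.exp (-y)) / y))
      (nhdsWithin 0 (Set.Ioi 0)) (nhds 0) := by
    have := (Real.continuousAt_log one_ne_zero).tendsto.comp h1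
    simpa using this.neg
  apply h2.congr'
  filter_upwards [self_mem_nhdsWithin] with y hy
  have hy : (0:ℝ) < y := hy
  rw [Real.log_div (one_sub_exp_neg_pos hy).ne' hy.ne']
  unfold G; ring

lemma G_self_bound {y : ℝ} (hy : 0 < y) : y * Gd y ≤ G y := by
  have key : ∀ ε ∈ Set.Ioo (0:ℝ) y, Gd y * (y - ε) ≤ G y - G ε := by
    intro ε hε
    obtain ⟨c, hc, hceq⟩ := G_mvt hε.1 hε.2
    have hcy : Gd y ≤ Gd c :=
      (Gd_anti (hε.1.trans hc.1) (hε.1.trans hε.2) hc.2).le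
    rw [hceq]
    have : (0:ℝ) ≤ y - ε := by linarith [hε.2]
    nlinarith
  have hA : Filter.Tendsto (fun ε : ℝ => Gd y * (y - ε)) (nhdsWithin 0 (Set.Ioi 0))
      (nhds (Gd y * y)) := by
    have : Filter.Tendsto (fun ε : ℝ => Gd y * (y - ε)) (nhds 0) (nhds (Gd y * (y - 0))) := by
      exact (tendsto_const_nhds.mul ((tendsto_const_nhds.sub tendsto_id)))
    simpa using this.mono_left nhdsWithin_le_nhds
  have hB : Filter.Tendsto (fun ε : ℝ => G y - G ε) (nhdsWithin 0 (Set.Ioi 0))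
      (nhds (G y - 0)) := tendsto_const_nhds.sub G_tendsto_zero
  have := le_of_tendsto_of_tendsto hA hB (by
    filter_upwards [Ioo_mem_nhdsGT_of_mem (Set.mem_Ico.2 ⟨le_refl 0, hy⟩)] with ε hε
    exact key ε hε)
  rw [sub_zero] at this
  linarith [this]

lemma G_slope_strict {a b : ℝ} (ha : 0 ≤ a) (hab : a < b) :
    Gd b * (b - a) < G b - G a := by
  rcases eq_or_lt_of_le ha with h | h
  · -- a = 0 case : need Gd b * b < G b
    subst h
    rw [G_zero, sub_zero, sub_zero]
    have hb2 : (0:ℝ) < b / 2 := by linarith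
    obtain ⟨c, hc, hceq⟩ := G_mvt hb2 (by linarith : b / 2 < b)
    have h1 : Gd b < Gd c := Gd_anti (Set.mem_Ioi.mpr (hb2.trans hc.1))
      (Set.mem_Ioi.mpr hab) hc.2
    have h2 : (b / 2) * Gd (b / 2) ≤ G (b / 2) := G_self_bound hb2
    have h3 : Gd b < Gd (b / 2) := Gd_anti (Set.mem_Ioi.mpr hb2)
      (Set.mem_Ioi.mpr hab) (by linarith)
    nlinarith
  · obtain ⟨c, hc, hceq⟩ := G_mvt h hab
    have h1 : Gd b < Gd c := Gd_anti (h.trans hc.1) (h.trans hab) hc.2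
    nlinarith [sub_pos.2 hab]


/-! ### Series helpers -/

lemma s_lt_one {L : ℝ} (hL : 0 < L) : Real.exp (-L) < 1 := by
  rw [Real.exp_lt_one_iff]; linarith

lemma spow_eq (L : ℝ) (k : ℕ) :
    Real.exp (-L) ^ (k + 1) = Real.exp (-(((k : ℝ) + 1) * L)) := by
  rw [← Real.exp_nat_mul]; push_cast; ring_nf

lemma den_pos {L : ℝ} (hL : 0 < L) (k : ℕ) : 0 < 1 - Real.exp (-L) ^ (k + 1) := by
  have h1 : Real.exp (-L) ^ (k + 1) < 1 :=
    pow_lt_one₀ (Real.exp_pos _).le (s_lt_one hL) (Nat.succ_ne_zero k)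
  linarith

lemma den_le {L : ℝ} (hL : 0 < L) (k : ℕ) :
    1 - Real.exp (-L) ≤ 1 - Real.exp (-L) ^ (k + 1) := by
  have : Real.exp (-L) ^ (k + 1) ≤ Real.exp (-L) :=
    pow_le_of_le_one (Real.exp_pos _).le (s_lt_one hL).le (Nat.succ_ne_zero k)
  linarith

lemma den_le_L {L : ℝ} (hL : 0 < L) (k : ℕ) :
    1 - Real.exp (-L) ^ (k + 1) ≤ ((k : ℝ) + 1) * L := by
  rw [spow_eq]
  have := Real.add_one_le_exp (-(((k : ℝ) + 1) * L))
  linarith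

lemma summable_geom_succ {u : ℝ} (hu0 : 0 ≤ u) (hu1 : u < 1) :
    Summable (fun k : ℕ => u ^ (k + 1)) := by
  have := (summable_geometric_of_lt_one hu0 hu1).mul_left u
  apply this.congr
  intro k; rw [pow_succ]; ring

lemma tsum_geom_succ {u : ℝ} (hu0 : 0 ≤ u) (hu1 : u < 1) :
    ∑' k : ℕ, u ^ (k + 1) = u / (1 - u) := by
  calc ∑' k : ℕ, u ^ (k + 1) = ∑' k : ℕ, u * u ^ k := by
        apply tsum_congr; intro k; rw [pow_succ]; ring
    _ = u * (1 - u)⁻¹ := by rw [tsum_mul_left, tsum_geometric_of_lt_one hu0 hu1]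
    _ = u / (1 - u) := (div_eq_mul_inv u _).symm

lemma summable_succ_mul_geom {u : ℝ} (hu0 : 0 ≤ u) (hu1 : u < 1) :
    Summable (fun k : ℕ => ((k : ℝ) + 1) * u ^ (k + 1)) := by
  have hn : ‖u‖ < 1 := by rwa [Real.norm_eq_abs, abs_of_nonneg hu0]
  have h1 : Summable (fun n : ℕ => (n : ℝ) * u ^ n) := by
    have := summable_pow_mul_geometric_of_norm_lt_one (R := ℝ) 1 hn
    apply this.congr; intro n; rw [pow_one]
  have := (summable_nat_add_iff (f := fun n : ℕ => (n : ℝ) * u ^ n) 1).2 h1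
  apply this.congr
  intro k; push_cast; ring_nf

lemma tsum_succ_mul_geom {u : ℝ} (hu0 : 0 ≤ u) (hu1 : u < 1) :
    ∑' k : ℕ, ((k : ℝ) + 1) * u ^ (k + 1) = u / (1 - u) ^ 2 := by
  have hn : ‖u‖ < 1 := by rwa [Real.norm_eq_abs, abs_of_nonneg hu0]
  have h := tsum_coe_mul_geometric_of_norm_lt_one (𝕜 := ℝ) hn
  have h1 : Summable (fun n : ℕ => (n : ℝ) * u ^ n) := by
    have := summable_pow_mul_geometric_of_norm_lt_one (R := ℝ) 1 hn
    apply this.congr; intro n; rw [pow_one]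
  rw [Summable.tsum_eq_zero_add h1] at h
  simp only [Nat.cast_zero, zero_mul, pow_zero, zero_add] at h
  rw [← h]
  apply tsum_congr; intro k; push_cast; ring_nf

lemma summable_aux {L : ℝ} (hL : 0 < L) {u : ℝ} (hu0 : 0 ≤ u) (hu1 : u < 1) :
    Summable (fun k : ℕ => u ^ (k + 1) / (1 - Real.exp (-L) ^ (k + 1))) := by
  have hs1 : (0:ℝ) < 1 - Real.exp (-L) := by
    have := s_lt_one hL; linarith
  apply Summable.of_nonneg_of_le
    (g := fun k : ℕ => u ^ (k + 1) / (1 - Real.exp (-L) ^ (k + 1)))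
    (f := fun k : ℕ => (1 - Real.exp (-L))⁻¹ * u ^ (k + 1))
  · intro k
    have := den_pos hL k
    positivity
  · intro k
    rw [inv_mul_eq_div]
    gcongr
    exact pow_le_of_le_one (Real.exp_pos _).le (s_lt_one hL).le (Nat.succ_ne_zero k)
  · exact (summable_geom_succ hu0 hu1).mul_left _


set_option maxHeartbeats 1000000 in
theorem coreLo {L t : ℝ} (hL : 0 < L) (ht0 : 0 < t) (ht1 : t < 1) :
    Real.log t + L * ((∑' k : ℕ, t ^ (k + 1) / (1 - Real.exp (-L) ^ (k + 1)))
        - ∑' k : ℕ, Real.exp (-L) ^ (k + 1) / (1 - Real.exp (-L) ^ (k + 1)))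
      < Real.log (Real.exp (L * t / (1 - t)) - 1) := by
  have h1t : (0:ℝ) < 1 - t := by linarith
  set s := Real.exp (-L) with hsdef
  have hs0 : 0 < s := Real.exp_pos _
  have hs1 : s < 1 := s_lt_one hL
  have hts0 : (0:ℝ) ≤ t * s := by positivity
  have hts1 : t * s < 1 := by nlinarith
  have h1ts : (0:ℝ) < 1 - t * s := by linarith
  have h1s : (0:ℝ) < 1 - s := by linarith
  have hden := den_pos hL
  set fA : ℕ → ℝ := fun k => t ^ (k + 1) / (1 - s ^ (k + 1)) with hfA
  set fB : ℕ → ℝ := fun k => s ^ (k + 1) / (1 - s ^ (k + 1)) with hfB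
  set fD : ℕ → ℝ := fun k => (1 - t ^ (k + 1)) * s ^ (k + 1) / (1 - s ^ (k + 1)) with hfD
  have sumA : Summable fA := summable_aux hL ht0.le ht1
  have sumB : Summable fB := summable_aux hL hs0.le hs1
  have sumGeom : Summable (fun k : ℕ => t ^ (k + 1)) := summable_geom_succ ht0.le ht1
  have hid : ∀ k : ℕ, fA k - fB k = t ^ (k + 1) - fD k := by
    intro k
    have h : 1 - s ^ (k + 1) ≠ 0 := (hden k).ne'
    simp only [hfA, hfB, hfD]
    field_simp
    ring
  have sumD : Summable fD := by
    have : Summable (fun k : ℕ => t ^ (k + 1) - (fA k - fB k)) :=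
      sumGeom.sub (sumA.sub sumB)
    apply this.congr
    intro k; rw [hid k]; ring
  have hABD : (∑' k, fA k) - ∑' k, fB k = t / (1 - t) - ∑' k, fD k := by
    calc (∑' k, fA k) - ∑' k, fB k = ∑' k, (fA k - fB k) := (Summable.tsum_sub sumA sumB).symm
      _ = ∑' k, (t ^ (k + 1) - fD k) := tsum_congr hid
      _ = (∑' k : ℕ, t ^ (k + 1)) - ∑' k, fD k := Summable.tsum_sub sumGeom sumD
      _ = t / (1 - t) - ∑' k, fD k := by rw [tsum_geom_succ ht0.le ht1]
  have habs_s : |s| < 1 := by rw [abs_of_nonneg hs0.le]; exact hs1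
  have habs_ts : |t * s| < 1 := by rw [abs_of_nonneg hts0]; exact hts1
  have habs_t : |t| < 1 := by rw [abs_of_nonneg ht0.le]; exact ht1
  have hsum1 := Real.hasSum_pow_div_log_of_abs_lt_one habs_s
  have hsum2 := Real.hasSum_pow_div_log_of_abs_lt_one habs_ts
  have hDlow : Real.log (1 - t * s) - Real.log (1 - s) ≤ L * ∑' k, fD k := by
    have hsub := hsum1.sub hsum2
    have hterm : ∀ k : ℕ, s ^ (k + 1) / ((k:ℝ) + 1) - (t * s) ^ (k + 1) / ((k:ℝ) + 1)
        ≤ L * fD k := by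
      intro k
      have hk1 : (0:ℝ) < (k:ℝ) + 1 := by positivity
      have hdk := hden k
      have hle := den_le_L hL k
      have htp : t ^ (k + 1) < 1 := pow_lt_one₀ ht0.le ht1 (Nat.succ_ne_zero k)
      have htp0 : (0:ℝ) < t ^ (k + 1) := by positivity
      have hsp : (0:ℝ) < s ^ (k + 1) := by positivity
      simp only [hfD]
      rw [mul_pow, div_sub_div_same, ← mul_div_assoc, div_le_div_iff₀ hk1 hdk]
      nlinarith [mul_le_mul_of_nonneg_left hle
        (show (0:ℝ) ≤ s ^ (k + 1) * (1 - t ^ (k + 1)) by nlinarith)]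
    have hLD := Summable.tsum_le_tsum hterm hsub.summable (sumD.mul_left L)
    rw [hsub.tsum_eq, tsum_mul_left] at hLD
    linarith
  have hsumt := Real.hasSum_pow_div_log_of_abs_lt_one habs_t
  have hflow : Real.log (1 - t * s) - Real.log (1 - t) < L * (t / (1 - t)) := by
    have hsub := hsumt.sub hsum2
    have hterm : ∀ k : ℕ, t ^ (k + 1) / ((k:ℝ) + 1) - (t * s) ^ (k + 1) / ((k:ℝ) + 1)
        ≤ L * t ^ (k + 1) := by
      intro k
      have hk1 : (0:ℝ) < (k:ℝ) + 1 := by positivity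
      have hle := den_le_L hL k
      have htp : (0:ℝ) < t ^ (k + 1) := by positivity
      have hsp : (0:ℝ) < s ^ (k + 1) := by positivity
      rw [mul_pow, div_sub_div_same, div_le_iff₀ hk1]
      nlinarith
    have hsL : 1 - s < L := by
      have := Real.add_one_lt_exp (x := -L) (by linarith)
      rw [← hsdef] at this
      linarith
    have hlt := Summable.tsum_lt_tsum (i := 0) hterm (by
        simp only [Nat.cast_zero, zero_add, pow_one]
        nlinarith) hsub.summable (sumGeom.mul_left L)
    rw [hsub.tsum_eq, tsum_mul_left, tsum_geom_succ ht0.le ht1] at hlt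
    linarith
  -- put the pieces together
  set f := L * t / (1 - t) with hfdef
  have hf0 : 0 < f := by rw [hfdef]; positivity
  have h1f : 0 < 1 - Real.exp (-f) := one_sub_exp_neg_pos hf0
  have hexpf : Real.exp (-f) < (1 - t) / (1 - t * s) := by
    have h2 : -f < Real.log (1 - t) - Real.log (1 - t * s) := by
      rw [hfdef]
      have : L * t / (1 - t) = L * (t / (1 - t)) := by ring
      rw [this]
      linarith
    calc Real.exp (-f) < Real.exp (Real.log (1 - t) - Real.log (1 - t * s)) :=
          Real.exp_lt_exp.2 h2
      _ = (1 - t) / (1 - t * s) := by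
          rw [Real.exp_sub, Real.exp_log h1t, Real.exp_log h1ts]
  have hgt : t * (1 - s) / (1 - t * s) < 1 - Real.exp (-f) := by
    have hrw : 1 - (1 - t) / (1 - t * s) = t * (1 - s) / (1 - t * s) := by
      field_simp
      ring
    linarith [hexpf, hrw.symm.le]
  have hloggt : Real.log t + Real.log (1 - s) - Real.log (1 - t * s)
      < Real.log (1 - Real.exp (-f)) := by
    have hpos : 0 < t * (1 - s) / (1 - t * s) := by positivity
    have hll := Real.log_lt_log hpos hgt
    rw [Real.log_div (by positivity) h1ts.ne', Real.log_mul ht0.ne' h1s.ne'] at hll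
    linarith
  have hlogexp : Real.log (Real.exp f - 1) = f + Real.log (1 - Real.exp (-f)) := by
    have hrw : Real.exp f - 1 = Real.exp f * (1 - Real.exp (-f)) := by
      rw [Real.exp_neg]
      field_simp
    rw [hrw, Real.log_mul (Real.exp_pos f).ne' h1f.ne', Real.log_exp]
  rw [hABD, hlogexp]
  have hfexpand : L * (t / (1 - t) - ∑' k, fD k) = f - L * ∑' k, fD k := by
    rw [hfdef]; ring
  rw [hfexpand]
  linarith

set_option maxHeartbeats 2000000 in
theorem coreU {L t : ℝ} (hL : 0 < L) (ht0 : 0 < t) (ht1 : t < 1) :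
    Real.log (Real.exp (L * t / (1 - t)) - 1) < Real.log L + Real.log t
      + L * ∑' k : ℕ, t ^ (k + 1) / (1 - Real.exp (-L) ^ (k + 1)) := by
  have h1t : (0:ℝ) < 1 - t := by linarith
  set s := Real.exp (-L) with hsdef
  have hs0 : 0 < s := Real.exp_pos _
  have hs1 : s < 1 := s_lt_one hL
  have hts0 : (0:ℝ) ≤ t * s := by positivity
  have hts1 : t * s < 1 := by nlinarith
  have hden := den_pos hL
  have sumGeom : Summable (fun k : ℕ => t ^ (k + 1)) := summable_geom_succ ht0.le ht1
  have sumKGeom : Summable (fun k : ℕ => ((k:ℝ) + 1) * t ^ (k + 1)) :=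
    summable_succ_mul_geom ht0.le ht1
  set fV : ℕ → ℝ := fun k => (t * s) ^ (k + 1) / (1 - s ^ (k + 1)) with hfV
  have sumV : Summable fV := summable_aux hL hts0 hts1
  -- splitting of the main series
  have hsplit : ∑' k : ℕ, t ^ (k + 1) / (1 - s ^ (k + 1))
      = t / (1 - t) + ∑' k, fV k := by
    have hid : ∀ k : ℕ, t ^ (k + 1) / (1 - s ^ (k + 1)) = t ^ (k + 1) + fV k := by
      intro k
      have h : 1 - s ^ (k + 1) ≠ 0 := (hden k).ne'
      simp only [hfV]
      rw [mul_pow]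
      field_simp
      ring
    rw [tsum_congr hid, Summable.tsum_add sumGeom sumV, tsum_geom_succ ht0.le ht1]
  -- the W series
  set W : ℕ → ℝ := fun k => t ^ (k + 1) * G (((k:ℝ) + 1) * L) with hW
  set W' : ℕ → ℝ := fun k => t ^ (k + 1) * G ((k:ℝ) * L) with hW'
  have hWnonneg : ∀ k, 0 ≤ W k := by
    intro k
    have := G_pos (show (0:ℝ) < ((k:ℝ) + 1) * L by positivity)
    simp only [hW]
    positivity
  have hWle : ∀ k, W k ≤ (L / 2) * (((k:ℝ) + 1) * t ^ (k + 1)) := by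
    intro k
    have h := G_le_half (show (0:ℝ) ≤ ((k:ℝ) + 1) * L by positivity)
    have htp : (0:ℝ) < t ^ (k + 1) := by positivity
    simp only [hW]
    nlinarith
  have sumW : Summable W :=
    Summable.of_nonneg_of_le hWnonneg hWle (sumKGeom.mul_left _)
  have hW'nonneg : ∀ k, 0 ≤ W' k := by
    intro k
    rcases Nat.eq_zero_or_pos k with h | h
    · subst h; simp [hW', G_zero]
    · have := G_pos (show (0:ℝ) < (k:ℝ) * L by
        have : (0:ℝ) < (k:ℝ) := by exact_mod_cast h
        positivity)
      simp only [hW']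
      positivity
  have hW'le : ∀ k, W' k ≤ (L / 2) * (((k:ℝ) + 1) * t ^ (k + 1)) := by
    intro k
    have h := G_le_half (show (0:ℝ) ≤ (k:ℝ) * L by positivity)
    have htp : (0:ℝ) < t ^ (k + 1) := by positivity
    have hk : (k:ℝ) ≤ (k:ℝ) + 1 := by linarith
    simp only [hW']
    nlinarith
  have sumW' : Summable W' :=
    Summable.of_nonneg_of_le hW'nonneg hW'le (sumKGeom.mul_left _)
  -- Abel / shift identity : ∑' W' = t * ∑' W
  have hshift : ∑' k, W' k = t * ∑' k, W k := by
    have h0 : Summable (fun k : ℕ => t ^ k * G ((k:ℝ) * L)) := by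
      apply Summable.of_nonneg_of_le
        (g := fun k : ℕ => t ^ k * G ((k:ℝ) * L))
        (f := fun k : ℕ => (L / 2) * ((k:ℝ) * t ^ k))
      · intro k
        rcases Nat.eq_zero_or_pos k with h | h
        · subst h; simp [G_zero]
        · have := G_pos (show (0:ℝ) < (k:ℝ) * L by
            have : (0:ℝ) < (k:ℝ) := by exact_mod_cast h
            positivity)
          positivity
      · intro k
        have h := G_le_half (show (0:ℝ) ≤ (k:ℝ) * L by positivity)
        have htp : (0:ℝ) ≤ t ^ k := by positivity
        have hk0 : (0:ℝ) ≤ (k:ℝ) := Nat.cast_nonneg k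
        nlinarith
      · have hn : ‖t‖ < 1 := by rwa [Real.norm_eq_abs, abs_of_nonneg ht0.le]
        have := summable_pow_mul_geometric_of_norm_lt_one (R := ℝ) 1 hn
        apply (this.mul_left (L / 2)).congr
        intro n; rw [pow_one]
    have h1 := Summable.tsum_eq_zero_add h0
    simp only [Nat.cast_zero, zero_mul, G_zero, mul_zero, pow_zero, zero_add] at h1
    have h2 : ∑' k, W' k = t * ∑' k : ℕ, t ^ k * G ((k:ℝ) * L) := by
      rw [← tsum_mul_left]
      apply tsum_congr
      intro k
      simp only [hW']
      rw [pow_succ]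
      ring
    rw [h2, h1]
    congr 1
    apply tsum_congr
    intro k
    simp only [hW]
    push_cast
    ring_nf
  -- strict termwise comparison with the telescoping series
  have hGd : ∀ k : ℕ, t ^ (k + 1) / ((k:ℝ) + 1) - L * fV k
      = t ^ (k + 1) * (L * Gd (((k:ℝ) + 1) * L)) := by
    intro k
    have hkL : (0:ℝ) < ((k:ℝ) + 1) * L := by positivity
    have hE : (0:ℝ) < Real.exp (((k:ℝ) + 1) * L) - 1 := exp_sub_one_pos hkL
    have hsm : s ^ (k + 1) = (Real.exp (((k:ℝ) + 1) * L))⁻¹ := by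
      rw [hsdef, spow_eq, ← Real.exp_neg]
    have hdenval : 1 - s ^ (k + 1)
        = (Real.exp (((k:ℝ) + 1) * L) - 1) * (Real.exp (((k:ℝ) + 1) * L))⁻¹ := by
      rw [hsm]
      field_simp
    simp only [hfV, Gd]
    rw [mul_pow, hdenval, hsm]
    have hEne : Real.exp (((k:ℝ) + 1) * L) ≠ 0 := (Real.exp_pos _).ne'
    field_simp
  have habs_t : |t| < 1 := by rw [abs_of_nonneg ht0.le]; exact ht1
  have hsumt := Real.hasSum_pow_div_log_of_abs_lt_one habs_t
  have sumLHS : Summable (fun k : ℕ => t ^ (k + 1) / ((k:ℝ) + 1) - L * fV k) :=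
    hsumt.summable.sub (sumV.mul_left L)
  have hterm : ∀ k : ℕ, t ^ (k + 1) / ((k:ℝ) + 1) - L * fV k ≤ W k - W' k := by
    intro k
    have hslope := G_slope_strict (a := (k:ℝ) * L) (b := ((k:ℝ) + 1) * L)
      (by positivity) (by nlinarith [Nat.cast_nonneg (α := ℝ) k])
    have hdiff : (((k:ℝ) + 1) * L - (k:ℝ) * L) = L := by ring
    rw [hdiff] at hslope
    have htp : (0:ℝ) < t ^ (k + 1) := by positivity
    rw [hGd k]
    simp only [hW, hW']
    nlinarith [hslope]
  have htermS : ∀ k : ℕ, t ^ (k + 1) / ((k:ℝ) + 1) - L * fV k < W k - W' k := by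
    intro k
    have hslope := G_slope_strict (a := (k:ℝ) * L) (b := ((k:ℝ) + 1) * L)
      (by positivity) (by nlinarith [Nat.cast_nonneg (α := ℝ) k])
    have hdiff : (((k:ℝ) + 1) * L - (k:ℝ) * L) = L := by ring
    rw [hdiff] at hslope
    have htp : (0:ℝ) < t ^ (k + 1) := by positivity
    rw [hGd k]
    simp only [hW, hW']
    nlinarith [hslope]
  have hlt := Summable.tsum_lt_tsum (i := 0) hterm (htermS 0) sumLHS (sumW.sub sumW')
  have hLHSval : ∑' k : ℕ, (t ^ (k + 1) / ((k:ℝ) + 1) - L * fV k)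
      = -Real.log (1 - t) - L * ∑' k, fV k := by
    rw [Summable.tsum_sub hsumt.summable (sumV.mul_left L), hsumt.tsum_eq, tsum_mul_left]
  rw [hLHSval, Summable.tsum_sub sumW sumW', hshift] at hlt
  -- hlt : -log(1-t) - L * ∑' fV < ∑' W - t * ∑' W
  set z := L / (1 - t) with hzdef
  have hz0 : 0 < z := by rw [hzdef]; positivity
  have htan : ∀ k : ℕ, W k ≤ (G z - Gd z * z) * t ^ (k + 1)
      + (Gd z * L) * (((k:ℝ) + 1) * t ^ (k + 1)) := by
    intro k
    have hkL : (0:ℝ) < ((k:ℝ) + 1) * L := by positivity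
    have htanG := G_tangent hkL hz0
    have htp : (0:ℝ) < t ^ (k + 1) := by positivity
    simp only [hW]
    nlinarith [htanG]
  have hsumtan : Summable (fun k : ℕ => (G z - Gd z * z) * t ^ (k + 1)
      + (Gd z * L) * (((k:ℝ) + 1) * t ^ (k + 1))) :=
    (sumGeom.mul_left _).add (sumKGeom.mul_left _)
  have hWsum_le := Summable.tsum_le_tsum htan sumW hsumtan
  rw [Summable.tsum_add (sumGeom.mul_left _) (sumKGeom.mul_left _), tsum_mul_left, tsum_mul_left,
    tsum_geom_succ ht0.le ht1, tsum_succ_mul_geom ht0.le ht1] at hWsum_le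
  have hWz : (1 - t) * ∑' k, W k ≤ t * G z := by
    have hexp : (1 - t) * ((G z - Gd z * z) * (t / (1 - t)) + (Gd z * L) * (t / (1 - t) ^ 2))
        = t * G z := by
      rw [hzdef]
      field_simp
      ring
    nlinarith [hWsum_le, h1t]
  set f := L * t / (1 - t) with hfdef
  have hf0 : 0 < f := by rw [hfdef]; positivity
  have hGf : t * G z ≤ G f := by
    have htanf := G_tangent hz0 hf0
    have hselff := G_self_bound hf0
    have hzf : t * (z - f) = f * (1 - t) := by
      rw [hzdef, hfdef]
      field_simp
    have h1 : t * G z ≤ t * (G f + Gd f * (z - f)) := mul_le_mul_of_nonneg_left htanf ht0.le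
    have h2 : t * (G f + Gd f * (z - f)) = t * G f + Gd f * (t * (z - f)) := by ring
    rw [h2, hzf] at h1
    have h3 : (1 - t) * (f * Gd f) ≤ (1 - t) * G f := mul_le_mul_of_nonneg_left hselff h1t.le
    nlinarith [h1, h3]
  have h1f : 0 < 1 - Real.exp (-f) := one_sub_exp_neg_pos hf0
  have hlogf : Real.log f = Real.log L + Real.log t - Real.log (1 - t) := by
    rw [hfdef, Real.log_div (by positivity) h1t.ne', Real.log_mul hL.ne' ht0.ne']
  have hlogexp : Real.log (Real.exp f - 1) = f + Real.log (1 - Real.exp (-f)) := by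
    have hrw : Real.exp f - 1 = Real.exp f * (1 - Real.exp (-f)) := by
      rw [Real.exp_neg]
      field_simp
    rw [hrw, Real.log_mul (Real.exp_pos f).ne' h1f.ne', Real.log_exp]
  rw [hsplit, hlogexp]
  have hGfval : G f = Real.log f - Real.log (1 - Real.exp (-f)) := rfl
  have hfinal : L * (t / (1 - t) + ∑' k, fV k) = f + L * ∑' k, fV k := by
    rw [hfdef]; ring
  rw [hfinal]
  -- chain : -log(1-t) - L∑fV < (1-t)∑W ≤ tGz ≤ Gf = log f - log(1-e^{-f})
  have hWtele : (∑' k, W k) - t * ∑' k, W k = (1 - t) * ∑' k, W k := by ring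
  rw [hWtele] at hlt
  linarith [hlt, hWz, hGf]

lemma rpow_term {q : ℝ} (hq : 1 < q) (y : ℝ) (k : ℕ) :
    q ^ (-(((k:ℝ) + 1) * y)) = ((q ^ (-y) : ℝ)) ^ (k + 1) := by
  have hq0 : (0:ℝ) ≤ q := by linarith
  rw [show (-(((k:ℝ) + 1) * y)) = (-y) * ((k:ℝ) + 1) by ring, Real.rpow_mul hq0,
    show ((k:ℝ) + 1) = ((k + 1 : ℕ) : ℝ) by push_cast; ring, Real.rpow_natCast]

lemma q_inv_eq {q : ℝ} (hq : 1 < q) : (q : ℝ) ^ (-1 : ℝ) = Real.exp (-Real.log q) := by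
  have hq0 : (0:ℝ) < q := by linarith
  rw [Real.rpow_neg_one, Real.exp_neg, Real.exp_log hq0]

lemma qDigamma_eq {q : ℝ} (hq : 1 < q) (x : ℝ) :
    qDigammaGt q x = -Real.log (q - 1) + Real.log q *
      (x - 1 / 2 - ∑' k : ℕ,
        ((q ^ (-x) : ℝ)) ^ (k + 1) / (1 - Real.exp (-Real.log q) ^ (k + 1))) := by
  unfold qDigammaGt
  congr 2
  congr 1
  apply tsum_congr
  intro k
  rw [rpow_term hq x k]
  congr 2
  rw [show (-((k:ℝ) + 1)) = -(((k:ℝ) + 1) * 1) by ring, rpow_term hq 1 k, q_inv_eq hq]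

end QDG


lemma qDigamma_one_eq {q : ℝ} (hq : 1 < q) :
    qDigammaGt q 1 = -Real.log (q - 1) + Real.log q *
      (1 - 1 / 2 - ∑' k : ℕ,
        Real.exp (-Real.log q) ^ (k + 1) / (1 - Real.exp (-Real.log q) ^ (k + 1))) := by
  rw [QDG.qDigamma_eq hq 1]
  congr 2
  congr 1
  apply tsum_congr
  intro k
  rw [QDG.q_inv_eq hq]

/-- For `q > 1` and `x > 0`, the double inequality bounding `ψ_q(x)`. -/
theorem qDigammaGt_double_inequality (q x : ℝ) (hq : 1 < q) (hx : 0 < x) :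
    qDigammaGt q 1 - Real.log q -
        Real.log (Real.exp (Real.log q / (q ^ x - 1)) - 1) < qDigammaGt q x ∧
    qDigammaGt q x <
      Real.log (Real.log q / (q - 1)) - Real.log q / 2 -
        Real.log (Real.exp (Real.log q / (q ^ x - 1)) - 1) := by
  have hq0 : (0:ℝ) < q := by linarith
  have hL : 0 < Real.log q := Real.log_pos hq
  have ht0 : 0 < (q:ℝ) ^ (-x) := Real.rpow_pos_of_pos hq0 _
  have ht1 : (q:ℝ) ^ (-x) < 1 := Real.rpow_lt_one_of_one_lt_of_neg hq (by linarith)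
  have h1t : (0:ℝ) < 1 - (q:ℝ) ^ (-x) := by linarith
  have hU := QDG.coreU (L := Real.log q) (t := (q:ℝ) ^ (-x)) hL ht0 ht1
  have hLo := QDG.coreLo (L := Real.log q) (t := (q:ℝ) ^ (-x)) hL ht0 ht1
  have hAx := QDG.qDigamma_eq hq x
  have hA1 := qDigamma_one_eq hq
  have hqx : (q:ℝ) ^ (x:ℝ) = ((q:ℝ) ^ (-x))⁻¹ := by
    rw [← Real.rpow_neg hq0.le, neg_neg]
  have hfrac : Real.log q / ((q:ℝ) ^ (x:ℝ) - 1)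
      = Real.log q * ((q:ℝ) ^ (-x)) / (1 - (q:ℝ) ^ (-x)) := by
    have h1 : (q:ℝ) ^ (x:ℝ) - 1 = (1 - (q:ℝ) ^ (-x)) / ((q:ℝ) ^ (-x)) := by
      rw [hqx]
      field_simp
    rw [h1, div_div_eq_mul_div]
  have hlogt : Real.log ((q:ℝ) ^ (-x)) = -(x * Real.log q) := by
    rw [Real.log_rpow hq0]
    ring
  have hlogdiv : Real.log (Real.log q / (q - 1))
      = Real.log (Real.log q) - Real.log (q - 1) :=
    Real.log_div hL.ne' (by linarith)
  have e0 : Real.log q * x = -Real.log ((q:ℝ) ^ (-x)) := by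
    rw [hlogt]
    ring
  rw [hAx, hA1, hfrac, hlogdiv]
  have e1 : Real.log q * (x - 1 / 2 - ∑' k : ℕ,
        ((q:ℝ) ^ (-x)) ^ (k + 1) / (1 - Real.exp (-Real.log q) ^ (k + 1)))
      = -Real.log ((q:ℝ) ^ (-x)) - Real.log q / 2 - Real.log q * (∑' k : ℕ,
        ((q:ℝ) ^ (-x)) ^ (k + 1) / (1 - Real.exp (-Real.log q) ^ (k + 1))) := by
    linear_combination e0
  have e2 : Real.log q * (1 - 1 / 2 - ∑' k : ℕ,
        Real.exp (-Real.log q) ^ (k + 1) / (1 - Real.exp (-Real.log q) ^ (k + 1)))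
      = Real.log q / 2 - Real.log q * (∑' k : ℕ,
        Real.exp (-Real.log q) ^ (k + 1) / (1 - Real.exp (-Real.log q) ^ (k + 1))) := by
    ring
  have e3 : Real.log q * ((∑' k : ℕ,
        ((q:ℝ) ^ (-x)) ^ (k + 1) / (1 - Real.exp (-Real.log q) ^ (k + 1)))
      - ∑' k : ℕ,
        Real.exp (-Real.log q) ^ (k + 1) / (1 - Real.exp (-Real.log q) ^ (k + 1)))
      = Real.log q * (∑' k : ℕ,
        ((q:ℝ) ^ (-x)) ^ (k + 1) / (1 - Real.exp (-Real.log q) ^ (k + 1)))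
      - Real.log q * (∑' k : ℕ,
        Real.exp (-Real.log q) ^ (k + 1) / (1 - Real.exp (-Real.log q) ^ (k + 1))) := by
    ring
  rw [e1, e2]
  rw [e3] at hLo
  constructor
  · linarith
  · linarith
end

section
/- Let 0 < q < 1 and let Φ_q(x) = ψ_q(x) − (ln q)·x + ln(exp((ln q)·q^x/(q^x − 1)) − 1). Then lim_{x→0+} Φ_q(x) = ψ_q(1) and lim_{x→∞} Φ_q(x) = ln(ln q/(q − 1)); in particular, the constants ψ_q(1) and ln(ln q/(q − 1)) in the double inequality ψ_q(1) + (ln q)·x − ln(exp((ln q)·q^x/(q^x − 1)) − 1) < ψ_q(x) < ln(ln q/(q − 1)) + (ln q)·x − ln(exp((ln q)·q^x/(q^x − 1)) − 1) are best possible. -/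
open Real Set Filter Topology

/-- The q-digamma function for `0 < q < 1`:
`ψ_q(x) = −ln(1−q) + (ln q)·∑_{k=1}^∞ q^{kx}/(1 − q^k)`. -/
noncomputable def qDigammaLt (q x : ℝ) : ℝ :=
  -Real.log (1 - q) +
    Real.log q * ∑' k : ℕ, q ^ (((k : ℝ) + 1) * x) / (1 - q ^ (k + 1))


section
variable {q : ℝ} (hq0 : 0 < q) (hq1 : q < 1)

include hq0 in
lemma rpow_term_eq (x : ℝ) (k : ℕ) : q ^ (((k : ℝ) + 1) * x) = (q ^ x) ^ (k + 1) := by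
  rw [mul_comm, Real.rpow_mul hq0.le,
    show ((k : ℝ) + 1) = ((k + 1 : ℕ) : ℝ) by push_cast; ring, Real.rpow_natCast]

include hq0 in
lemma qpow_pos (x : ℝ) : 0 < q ^ x := Real.rpow_pos_of_pos hq0 x

include hq0 hq1 in
lemma qpow_lt_one {x : ℝ} (hx : 0 < x) : q ^ x < 1 := Real.rpow_lt_one hq0.le hq1 hx

include hq0 hq1 in
lemma npow_lt_one (k : ℕ) : q ^ (k + 1) < 1 := pow_lt_one₀ hq0.le hq1 (Nat.succ_ne_zero k)

include hq0 hq1 in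
lemma denom_le (k : ℕ) : 1 - q ≤ 1 - q ^ (k + 1) := by
  have : q ^ (k + 1) ≤ q := by
    calc q ^ (k+1) ≤ q ^ 1 := pow_le_pow_of_le_one hq0.le hq1.le (by omega)
    _ = q := pow_one q
  linarith

lemma summable_geom_shift {r : ℝ} (h0 : 0 ≤ r) (h1 : r < 1) :
    Summable (fun k : ℕ => r ^ (k + 1)) := by
  simp_rw [pow_succ']
  exact (summable_geometric_of_lt_one h0 h1).mul_left r

include hq0 hq1 in
lemma summable_S {x : ℝ} (hx : 0 < x) :
    Summable (fun k : ℕ => q ^ (((k : ℝ) + 1) * x) / (1 - q ^ (k + 1))) := by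
  refine Summable.of_nonneg_of_le ?_ ?_
    ((summable_geom_shift ((qpow_pos hq0 x).le) (qpow_lt_one hq0 hq1 hx)).div_const (1 - q))
  · intro k
    apply div_nonneg (Real.rpow_nonneg hq0.le _)
    linarith [npow_lt_one hq0 hq1 k, denom_le hq0 hq1 k]
  · intro k
    rw [rpow_term_eq hq0]
    exact div_le_div_of_nonneg_left (by positivity) (by linarith) (denom_le hq0 hq1 k)

include hq0 hq1 in
lemma tsum_geom {x : ℝ} (hx : 0 < x) :
    ∑' k : ℕ, q ^ (((k : ℝ) + 1) * x) = q ^ x / (1 - q ^ x) := by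
  have h0 := (qpow_pos hq0 x).le
  have h1 := qpow_lt_one hq0 hq1 hx
  simp_rw [rpow_term_eq hq0, pow_succ']
  rw [tsum_mul_left, tsum_geometric_of_lt_one h0 h1, div_eq_mul_inv]

include hq0 hq1 in
lemma S_rec {x : ℝ} (hx : 0 < x) :
    (∑' k : ℕ, q ^ (((k : ℝ) + 1) * x) / (1 - q ^ (k + 1))) =
      q ^ x / (1 - q ^ x) +
        ∑' k : ℕ, q ^ (((k : ℝ) + 1) * (x + 1)) / (1 - q ^ (k + 1)) := by
  have hterm : ∀ k : ℕ, q ^ (((k : ℝ) + 1) * x) / (1 - q ^ (k + 1)) =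
      q ^ (((k : ℝ) + 1) * x) + q ^ (((k : ℝ) + 1) * (x + 1)) / (1 - q ^ (k + 1)) := by
    intro k
    have hne : (1 : ℝ) - q ^ (k + 1) ≠ 0 := by
      have := npow_lt_one hq0 hq1 k; linarith
    have h2 : q ^ (((k : ℝ) + 1) * (x + 1)) = q ^ (((k : ℝ) + 1) * x) * q ^ (k + 1) := by
      rw [show ((k : ℝ) + 1) * (x + 1) = ((k : ℝ) + 1) * x + (((k+1:ℕ) : ℝ)) by push_cast; ring,
        Real.rpow_add hq0, Real.rpow_natCast]
    rw [h2]
    field_simp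
    ring
  rw [tsum_congr hterm,
    Summable.tsum_add (by
      simp_rw [rpow_term_eq hq0]
      exact summable_geom_shift ((qpow_pos hq0 x).le) (qpow_lt_one hq0 hq1 hx))
      (summable_S hq0 hq1 (by linarith)),
    tsum_geom hq0 hq1 hx]


include hq0 in
lemma cont_qpow : Continuous (fun y : ℝ => q ^ y) := by
  have : (fun y : ℝ => q ^ y) = fun y => Real.exp (Real.log q * y) :=
    funext fun y => Real.rpow_def_of_pos hq0 y
  rw [this]; fun_prop

include hq0 hq1 in
lemma summable_bound : Summable (fun k : ℕ => q ^ (k + 1) / (1 - q)) :=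
  (summable_geom_shift hq0.le hq1).div_const _

-- dominated convergence: S(x+1) → S(1) as x → 0⁺
include hq0 hq1 in
lemma S_tendsto_zero_right :
    Tendsto (fun x : ℝ => ∑' k : ℕ, q ^ (((k : ℝ) + 1) * (x + 1)) / (1 - q ^ (k + 1)))
      (𝓝[>] (0:ℝ)) (𝓝 (∑' k : ℕ, q ^ (((k : ℝ) + 1) * (1:ℝ)) / (1 - q ^ (k + 1)))) := by
  refine tendsto_tsum_of_dominated_convergence (summable_bound hq0 hq1) ?_ ?_
  · intro k
    have hc : Continuous (fun x : ℝ => q ^ (((k : ℝ) + 1) * (x + 1)) / (1 - q ^ (k + 1))) := by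
      apply Continuous.div_const
      exact (cont_qpow hq0).comp (by fun_prop)
    have := (hc.tendsto 0).mono_left (nhdsWithin_le_nhds : 𝓝[>] (0:ℝ)  ≤ 𝓝 0)
    simpa using this
  · filter_upwards [self_mem_nhdsWithin] with x hx k
    have hx : (0:ℝ) < x := hx
    have hnn : 0 ≤ q ^ (((k : ℝ) + 1) * (x + 1)) / (1 - q ^ (k + 1)) := by
      apply div_nonneg (Real.rpow_nonneg hq0.le _)
      linarith [npow_lt_one hq0 hq1 k]
    rw [Real.norm_eq_abs, abs_of_nonneg hnn]
    have hexp : q ^ (((k : ℝ) + 1) * (x + 1)) ≤ q ^ (k + 1) := by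
      rw [show (q ^ (k+1) : ℝ) = q ^ (((k+1:ℕ):ℝ)) by rw [Real.rpow_natCast]]
      apply rpow_le_rpow_of_exponent_ge hq0 hq1.le
      push_cast
      nlinarith [Nat.cast_nonneg (α := ℝ) k]
    exact div_le_div₀ (by positivity) hexp (by linarith) (denom_le hq0 hq1 k)

include hq0 hq1 in
lemma qpow_tendsto_zero : Tendsto (fun y : ℝ => q ^ y) atTop (𝓝 0) := by
  have hL : Real.log q < 0 := Real.log_neg hq0 hq1
  have : (fun y : ℝ => q ^ y) = fun y => Real.exp (Real.log q * y) :=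
    funext fun y => Real.rpow_def_of_pos hq0 y
  rw [this]
  exact Real.tendsto_exp_atBot.comp ((tendsto_const_mul_atBot_of_neg hL).mpr tendsto_id)

-- dominated convergence: S(x+1) → 0 as x → ∞
include hq0 hq1 in
lemma S_tendsto_atTop :
    Tendsto (fun x : ℝ => ∑' k : ℕ, q ^ (((k : ℝ) + 1) * (x + 1)) / (1 - q ^ (k + 1)))
      atTop (𝓝 0) := by
  have h0 : (0:ℝ) = ∑' _ : ℕ, (0:ℝ) := by simp
  rw [h0]
  refine tendsto_tsum_of_dominated_convergence (summable_bound hq0 hq1) ?_ ?_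
  · intro k
    have h1 : Tendsto (fun x : ℝ => ((k : ℝ) + 1) * (x + 1)) atTop atTop :=
      (tendsto_atTop_add_const_right atTop (1:ℝ) tendsto_id).const_mul_atTop
        (by positivity)
    have := ((qpow_tendsto_zero hq0 hq1).comp h1).div_const (1 - q ^ (k + 1))
    simpa using this
  · filter_upwards [eventually_ge_atTop (0:ℝ)] with x hx k
    have hnn : 0 ≤ q ^ (((k : ℝ) + 1) * (x + 1)) / (1 - q ^ (k + 1)) := by
      apply div_nonneg (Real.rpow_nonneg hq0.le _)
      linarith [npow_lt_one hq0 hq1 k]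
    rw [Real.norm_eq_abs, abs_of_nonneg hnn]
    have hexp : q ^ (((k : ℝ) + 1) * (x + 1)) ≤ q ^ (k + 1) := by
      rw [show (q ^ (k+1) : ℝ) = q ^ (((k+1:ℕ):ℝ)) by rw [Real.rpow_natCast]]
      apply rpow_le_rpow_of_exponent_ge hq0 hq1.le
      push_cast
      nlinarith [Nat.cast_nonneg (α := ℝ) k]
    exact div_le_div₀ (by positivity) hexp (by linarith) (denom_le hq0 hq1 k)


-- A x
include hq0 hq1 in
lemma A_pos {x : ℝ} (hx : 0 < x) : 0 < Real.log q * q ^ x / (q ^ x - 1) := by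
  have hL : Real.log q < 0 := Real.log_neg hq0 hq1
  have h1 := qpow_pos hq0 x
  have h2 := qpow_lt_one hq0 hq1 hx
  apply div_pos_of_neg_of_neg (mul_neg_of_neg_of_pos hL h1)
  linarith

include hq0 hq1 in
lemma psi_rec {x : ℝ} (hx : 0 < x) :
    qDigammaLt q x = qDigammaLt q (x + 1) +
      Real.log q * (q ^ x / (1 - q ^ x)) := by
  unfold qDigammaLt
  rw [S_rec hq0 hq1 hx]
  ring

include hq0 hq1 in
lemma A_neg_eq {x : ℝ} (hx : 0 < x) :
    Real.log q * (q ^ x / (1 - q ^ x)) = -(Real.log q * q ^ x / (q ^ x - 1)) := by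
  have h2 := qpow_lt_one hq0 hq1 hx
  rw [div_eq_mul_inv, div_eq_mul_inv, show q ^ x - 1 = -(1 - q ^ x) by ring, inv_neg]
  ring

lemma log_exp_sub_one {A : ℝ} (hA : 0 < A) :
    Real.log (Real.exp A - 1) = A + Real.log (1 - Real.exp (-A)) := by
  have h : Real.exp A - 1 = Real.exp A * (1 - Real.exp (-A)) := by
    rw [mul_sub, mul_one, ← Real.exp_add]
    simp
  have hlt : Real.exp (-A) < 1 := Real.exp_lt_one_iff.mpr (by linarith)
  rw [h, Real.log_mul (Real.exp_ne_zero _) (by linarith), Real.log_exp]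

-- A → ∞ as x → 0⁺
include hq0 hq1 in
lemma A_tendsto_atTop :
    Tendsto (fun x : ℝ => Real.log q * q ^ x / (q ^ x - 1)) (𝓝[>] (0:ℝ)) atTop := by
  have hL : Real.log q < 0 := Real.log_neg hq0 hq1
  have heq : (fun x : ℝ => Real.log q * q ^ x / (q ^ x - 1)) =
      fun x : ℝ => (-(Real.log q * q ^ x)) * (1 - q ^ x)⁻¹ := by
    funext x
    rw [div_eq_mul_inv, show q ^ x - 1 = -(1 - q ^ x) by ring, inv_neg]
    ring
  rw [heq]
  apply Tendsto.pos_mul_atTop (C := -Real.log q) (by linarith)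
  · have hc : Continuous (fun x : ℝ => -(Real.log q * q ^ x)) :=
      (continuous_const.mul (cont_qpow hq0)).neg
    have := (hc.tendsto 0).mono_left (nhdsWithin_le_nhds : 𝓝[>] (0:ℝ) ≤ 𝓝 0)
    simpa using this
  · apply Tendsto.inv_tendsto_nhdsGT_zero
    rw [tendsto_nhdsWithin_iff]
    constructor
    · have hc : Continuous (fun x : ℝ => 1 - q ^ x) := continuous_const.sub (cont_qpow hq0)
      have := (hc.tendsto 0).mono_left (nhdsWithin_le_nhds : 𝓝[>] (0:ℝ) ≤ 𝓝 0)
      simpa using this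
    · filter_upwards [self_mem_nhdsWithin] with x hx
      have := qpow_lt_one hq0 hq1 (hx : (0:ℝ) < x)
      simpa using by linarith

-- A → 0 as x → ∞
include hq0 hq1 in
lemma A_tendsto_zero :
    Tendsto (fun x : ℝ => Real.log q * q ^ x / (q ^ x - 1)) atTop (𝓝 0) := by
  have h1 : Tendsto (fun x : ℝ => Real.log q * q ^ x) atTop (𝓝 (Real.log q * 0)) :=
    (qpow_tendsto_zero hq0 hq1).const_mul _
  have h2 : Tendsto (fun x : ℝ => q ^ x - 1) atTop (𝓝 ((0:ℝ) - 1)) :=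
    (qpow_tendsto_zero hq0 hq1).sub_const 1
  have := h1.div h2 (by norm_num)
  simpa [Pi.div_def] using this

include hq0 hq1 in
lemma limit_one :
    Tendsto
      (fun x => qDigammaLt q x - Real.log q * x +
        Real.log (Real.exp (Real.log q * q ^ x / (q ^ x - 1)) - 1))
      (𝓝[>] (0:ℝ)) (𝓝 (qDigammaLt q 1)) := by
  set A : ℝ → ℝ := fun x => Real.log q * q ^ x / (q ^ x - 1) with hA
  have heq : (fun x => qDigammaLt q x - Real.log q * x + Real.log (Real.exp (A x) - 1))
      =ᶠ[𝓝[>] (0:ℝ)] (fun x => qDigammaLt q (x + 1) - Real.log q * x +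
        Real.log (1 - Real.exp (-(A x)))) := by
    show ∀ᶠ x in 𝓝[>] (0:ℝ),
      qDigammaLt q x - Real.log q * x + Real.log (Real.exp (A x) - 1) =
        qDigammaLt q (x + 1) - Real.log q * x + Real.log (1 - Real.exp (-(A x)))
    filter_upwards [self_mem_nhdsWithin] with x hx
    have hx : (0:ℝ) < x := hx
    rw [psi_rec hq0 hq1 hx, A_neg_eq hq0 hq1 hx, log_exp_sub_one (A_pos hq0 hq1 hx)]
    ring
  apply Tendsto.congr' heq.symm
  have T1 : Tendsto (fun x : ℝ => qDigammaLt q (x + 1)) (𝓝[>] (0:ℝ))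
      (𝓝 (qDigammaLt q 1)) := by
    unfold qDigammaLt
    have := (S_tendsto_zero_right hq0 hq1).const_mul (Real.log q)
    have h2 := tendsto_const_nhds (α := ℝ) (x := -Real.log (1-q))
      (f := 𝓝[>] (0:ℝ)) |>.add this
    simpa using h2
  have T2 : Tendsto (fun x : ℝ => Real.log q * x) (𝓝[>] (0:ℝ)) (𝓝 0) := by
    have hc : Continuous fun x : ℝ => Real.log q * x := by fun_prop
    have h := (hc.tendsto 0).mono_left (nhdsWithin_le_nhds : 𝓝[>] (0:ℝ) ≤ 𝓝 0)
    simpa using h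
  have T3 : Tendsto (fun x : ℝ => Real.log (1 - Real.exp (-(A x)))) (𝓝[>] (0:ℝ)) (𝓝 0) := by
    have hAt : Tendsto (fun x => -(A x)) (𝓝[>] (0:ℝ)) atBot :=
      tendsto_neg_atTop_atBot.comp (A_tendsto_atTop hq0 hq1)
    have hexp : Tendsto (fun x => Real.exp (-(A x))) (𝓝[>] (0:ℝ)) (𝓝 0) :=
      Real.tendsto_exp_atBot.comp hAt
    have h1 : Tendsto (fun x => 1 - Real.exp (-(A x))) (𝓝[>] (0:ℝ)) (𝓝 1) := by
      have := (tendsto_const_nhds (x := (1:ℝ)) (f := 𝓝[>] (0:ℝ))).sub hexp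
      simpa using this
    have := (Real.continuousAt_log one_ne_zero).tendsto.comp h1
    simpa [Function.comp_def] using this
  have := (T1.sub T2).add T3
  simpa using this

include hq0 hq1 in
lemma limit_two :
    Tendsto
      (fun x => qDigammaLt q x - Real.log q * x +
        Real.log (Real.exp (Real.log q * q ^ x / (q ^ x - 1)) - 1))
      atTop (𝓝 (Real.log (Real.log q / (q - 1)))) := by
  have hL : Real.log q < 0 := Real.log_neg hq0 hq1
  set A : ℝ → ℝ := fun x => Real.log q * q ^ x / (q ^ x - 1) with hA
  have heq : (fun x => qDigammaLt q x - Real.log q * x + Real.log (Real.exp (A x) - 1))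
      =ᶠ[(atTop : Filter ℝ)] (fun x => qDigammaLt q (x + 1) - A x +
        Real.log ((Real.exp (A x) - 1) / q ^ x)) := by
    show ∀ᶠ x in (atTop : Filter ℝ),
      qDigammaLt q x - Real.log q * x + Real.log (Real.exp (A x) - 1) =
        qDigammaLt q (x + 1) - A x + Real.log ((Real.exp (A x) - 1) / q ^ x)
    filter_upwards [eventually_gt_atTop (0:ℝ)] with x hx
    have hApos := A_pos hq0 hq1 hx
    have hexp1 : 1 < Real.exp (A x) := by
      have := Real.add_one_lt_exp (ne_of_gt hApos); linarith
    rw [psi_rec hq0 hq1 hx, A_neg_eq hq0 hq1 hx,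
      Real.log_div (by linarith) (ne_of_gt (qpow_pos hq0 x)),
      Real.log_rpow hq0]
    ring
  apply Tendsto.congr' heq.symm
  have T1 : Tendsto (fun x : ℝ => qDigammaLt q (x + 1)) atTop
      (𝓝 (-Real.log (1 - q))) := by
    unfold qDigammaLt
    have := (S_tendsto_atTop hq0 hq1).const_mul (Real.log q)
    have h2 := tendsto_const_nhds (α := ℝ) (x := -Real.log (1-q))
      (f := (atTop : Filter ℝ)) |>.add this
    simpa using h2
  have T2 : Tendsto A atTop (𝓝 0) := A_tendsto_zero hq0 hq1
  have hslope : Tendsto (fun y : ℝ => (Real.exp y - 1) / y) (𝓝[≠] (0:ℝ)) (𝓝 1) := by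
    have h := (Real.hasDerivAt_exp 0)
    rw [hasDerivAt_iff_tendsto_slope] at h
    have heq2 : (fun y : ℝ => (Real.exp y - 1) / y) = slope Real.exp 0 := by
      funext y
      rw [slope_def_field]
      simp
    rw [heq2]
    simpa using h
  have hA_ne : Tendsto A atTop (𝓝[≠] (0:ℝ)) := by
    rw [tendsto_nhdsWithin_iff]
    refine ⟨T2, ?_⟩
    filter_upwards [eventually_gt_atTop (0:ℝ)] with x hx
    exact (ne_of_gt (A_pos hq0 hq1 hx))
  have T3 : Tendsto (fun x => (Real.exp (A x) - 1) / A x) atTop (𝓝 1) := hslope.comp hA_ne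
  have T4 : Tendsto (fun x => A x / q ^ x) atTop (𝓝 (-Real.log q)) := by
    have heq4 : (fun x => A x / q ^ x) = fun x => Real.log q / (q ^ x - 1) := by
      funext x
      have h0 := (qpow_pos hq0 x).ne'
      simp only [hA]
      field_simp
    rw [heq4]
    have h2 : Tendsto (fun x : ℝ => q ^ x - 1) atTop (𝓝 ((0:ℝ) - 1)) :=
      (qpow_tendsto_zero hq0 hq1).sub_const 1
    have h1 : Tendsto (fun _x : ℝ => Real.log q) atTop (𝓝 (Real.log q)) := tendsto_const_nhds
    have hv : Real.log q / ((0:ℝ) - 1) = -Real.log q := by rw [zero_sub, div_neg, div_one]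
    rw [← hv]
    exact h1.div h2 (by norm_num)
  have T5 : Tendsto (fun x => (Real.exp (A x) - 1) / q ^ x) atTop (𝓝 (-Real.log q)) := by
    have heq5 : ∀ᶠ x in (atTop : Filter ℝ),
        ((Real.exp (A x) - 1) / A x) * (A x / q ^ x) = (Real.exp (A x) - 1) / q ^ x := by
      filter_upwards [eventually_gt_atTop (0:ℝ)] with x hx
      have hAne := (ne_of_gt (A_pos hq0 hq1 hx))
      rw [div_mul_div_comm]
      rw [mul_comm (A x) (q ^ x)]
      rw [mul_div_mul_right _ _ hAne]
    apply Tendsto.congr' heq5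
    have := T3.mul T4
    simpa using this
  have T6 : Tendsto (fun x => Real.log ((Real.exp (A x) - 1) / q ^ x)) atTop
      (𝓝 (Real.log (-Real.log q))) :=
    ((Real.continuousAt_log (by linarith)).tendsto.comp T5)
  have hval : Real.log (Real.log q / (q - 1)) = -Real.log (1 - q) - 0 + Real.log (-Real.log q) := by
    rw [show Real.log q / (q - 1) = (-Real.log q) / (1 - q) by
        rw [← neg_div_neg_eq]; ring_nf,
      Real.log_div (by linarith) (by linarith)]
    ring
  rw [hval]
  exact (T1.sub T2).add T6

end

/-- For `0 < q < 1`, `Φ_q(x) → ψ_q(1)` as `x → 0⁺` and `Φ_q(x) → ln(ln q/(q−1))`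
as `x → ∞`; consequently, the constants `ψ_q(1)` and `ln(ln q/(q−1))` in the
double inequality are best possible. -/
theorem Phi_limits_best_possible (q : ℝ) (hq0 : 0 < q) (hq1 : q < 1) :
    Tendsto
      (fun x => qDigammaLt q x - Real.log q * x +
        Real.log (Real.exp (Real.log q * q ^ x / (q ^ x - 1)) - 1))
      (𝓝[>] 0) (𝓝 (qDigammaLt q 1)) ∧
    Tendsto
      (fun x => qDigammaLt q x - Real.log q * x +
        Real.log (Real.exp (Real.log q * q ^ x / (q ^ x - 1)) - 1))
      atTop (𝓝 (Real.log (Real.log q / (q - 1)))) ∧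
    (∀ a : ℝ,
      (∀ x : ℝ, 0 < x →
        a + Real.log q * x -
            Real.log (Real.exp (Real.log q * q ^ x / (q ^ x - 1)) - 1) < qDigammaLt q x) →
      a ≤ qDigammaLt q 1) ∧
    (∀ b : ℝ,
      (∀ x : ℝ, 0 < x →
        qDigammaLt q x <
          b + Real.log q * x -
            Real.log (Real.exp (Real.log q * q ^ x / (q ^ x - 1)) - 1)) →
      Real.log (Real.log q / (q - 1)) ≤ b) := by
  refine ⟨limit_one hq0 hq1, limit_two hq0 hq1, ?_, ?_⟩
  · intro a ha
    apply ge_of_tendsto (limit_one hq0 hq1)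
    filter_upwards [self_mem_nhdsWithin] with x hx
    have := ha x hx
    linarith
  · intro b hb
    apply le_of_tendsto (limit_two hq0 hq1)
    filter_upwards [eventually_gt_atTop (0:ℝ)] with x hx
    have := hb x hx
    linarith
end

section
/- Let q > 1 and let φ̃_q(x) = ψ_q(x) + ln(exp((ln q)/(q^x − 1)) − 1). Then lim_{x→0+} φ̃_q(x) = ψ_q(1) − ln q and lim_{x→∞} φ̃_q(x) = ln(ln q/(q − 1)) − (ln q)/2; in particular, the constants ψ_q(1) − ln q and ln(ln q/(q − 1)) − (ln q)/2 in the double inequality ψ_q(1) − ln q − ln(exp((ln q)/(q^x − 1)) − 1) < ψ_q(x) < ln(ln q/(q − 1)) − (ln q)/2 − ln(exp((ln q)/(q^x − 1)) − 1) are best possible. -/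
open Real Set Filter Topology

noncomputable def qS (q x : ℝ) : ℝ :=
  ∑' k : ℕ, q ^ (-(((k : ℝ) + 1) * x)) / (1 - q ^ (-((k : ℝ) + 1)))

section aux
variable {q : ℝ} (hq : 1 < q)

lemma qterm_eq (hq0 : 0 < q) (x : ℝ) (k : ℕ) :
    q ^ (-(((k : ℝ) + 1) * x)) = (q ^ (-x)) ^ (k + 1) := by
  rw [← rpow_natCast (q ^ (-x)) (k + 1), ← rpow_mul hq0.le]
  congr 1
  push_cast
  ring

include hq

lemma qdenom_eq (k : ℕ) : q ^ (-((k : ℝ) + 1)) = (q ^ (-(1:ℝ))) ^ (k + 1) := by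
  have := qterm_eq (lt_trans one_pos hq) 1 k
  simpa using this

lemma qdenom_pos (k : ℕ) : 0 < 1 - q ^ (-((k : ℝ) + 1)) := by
  have : q ^ (-((k : ℝ) + 1)) < 1 :=
    rpow_lt_one_of_one_lt_of_neg hq (neg_neg_of_pos (by positivity))
  exact sub_pos.2 this

end aux

section aux2
variable {q : ℝ} (hq : 1 < q)

lemma geom_aux {r : ℝ} (c : ℝ) (h0 : 0 ≤ r) (h1 : r < 1) :
    Summable (fun k : ℕ => r ^ (k + 1) * c) := by
  have := ((summable_geometric_of_lt_one h0 h1).mul_right c).mul_left r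
  refine this.congr fun k => ?_
  ring

include hq

lemma qdenom_ge (k : ℕ) : 1 - q⁻¹ ≤ 1 - q ^ (-((k : ℝ) + 1)) := by
  have h : q ^ (-((k : ℝ) + 1)) ≤ q ^ (-(1:ℝ)) := by
    rw [rpow_le_rpow_left_iff hq]
    have : (0:ℝ) ≤ (k:ℝ) := Nat.cast_nonneg k
    linarith
  rw [rpow_neg_one] at h
  linarith

lemma qinv_lt : q⁻¹ < 1 := inv_lt_one_of_one_lt₀ hq

lemma qr_mem {x : ℝ} (hx : 0 < x) : 0 ≤ q ^ (-x) ∧ q ^ (-x) < 1 :=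
  ⟨rpow_nonneg (by linarith) _, rpow_lt_one_of_one_lt_of_neg hq (neg_neg_of_pos hx)⟩

lemma qS_summable {x : ℝ} (hx : 0 < x) :
    Summable (fun k : ℕ => q ^ (-(((k : ℝ) + 1) * x)) / (1 - q ^ (-((k : ℝ) + 1)))) := by
  obtain ⟨h0, h1⟩ := qr_mem hq hx
  refine Summable.of_nonneg_of_le (fun k => ?_) (fun k => ?_)
    (geom_aux (1 - q⁻¹)⁻¹ h0 h1)
  · exact div_nonneg (rpow_nonneg (by linarith) _) (qdenom_pos hq k).le
  · rw [qterm_eq (by linarith : (0:ℝ) < q) x k, ← div_eq_mul_inv]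
    exact div_le_div₀ (by positivity) le_rfl
      (by have := qinv_lt hq; linarith) (qdenom_ge hq k)

lemma qgeom_tsum {x : ℝ} (hx : 0 < x) :
    ∑' k : ℕ, (q ^ (-x)) ^ (k + 1) = (q ^ x - 1)⁻¹ := by
  obtain ⟨h0, h1⟩ := qr_mem hq hx
  have hs : ∑' k : ℕ, (q ^ (-x)) ^ (k + 1) = (∑' k : ℕ, (q ^ (-x)) ^ k) * q ^ (-x) := by
    rw [← tsum_mul_right]
    exact tsum_congr fun k => (pow_succ _ _)
  rw [hs, tsum_geometric_of_lt_one h0 h1]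
  have hq0 : (0:ℝ) < q := by linarith
  have hqx : 1 < q ^ x := by
    rw [one_lt_rpow_iff_of_pos hq0]; left; exact ⟨hq, hx⟩
  rw [rpow_neg hq0.le]
  have hne : q ^ x ≠ 0 := by positivity
  have hne1 : q ^ x - 1 ≠ 0 := by linarith
  field_simp

lemma qS_shift {x : ℝ} (hx : 0 < x) : qS q x = qS q (x + 1) + (q ^ x - 1)⁻¹ := by
  have hq0 : (0:ℝ) < q := by linarith
  have h1 := qS_summable hq hx
  have h2 := qS_summable hq (by linarith : (0:ℝ) < x + 1)
  have key : ∀ k : ℕ,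
      q ^ (-(((k : ℝ) + 1) * x)) / (1 - q ^ (-((k : ℝ) + 1)))
        - q ^ (-(((k : ℝ) + 1) * (x + 1))) / (1 - q ^ (-((k : ℝ) + 1)))
        = (q ^ (-x)) ^ (k + 1) := by
    intro k
    have e1 := qterm_eq hq0 x k
    have e2 := qterm_eq hq0 (x + 1) k
    have e3 : q ^ (-(x+1)) = q ^ (-x) * q ^ (-(1:ℝ)) := by
      rw [← rpow_add hq0]; ring_nf
    have hd := qdenom_pos hq k
    rw [e1, e2, e3, mul_pow, ← qdenom_eq hq k, div_sub_div_same]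
    rw [div_eq_iff (ne_of_gt hd)]
    ring
  have : qS q x - qS q (x + 1) = ∑' k : ℕ, (q ^ (-x)) ^ (k + 1) := by
    rw [qS, qS, ← Summable.tsum_sub h1 h2]
    exact tsum_congr key
  rw [qgeom_tsum hq hx] at this
  linarith

end aux2

section aux3
variable {q : ℝ} (hq : 1 < q)
include hq

lemma qbound_summable :
    Summable (fun k : ℕ => q ^ (-((k : ℝ) + 1)) / (1 - q⁻¹)) := by
  have := geom_aux (r := q ^ (-(1:ℝ))) (1 - q⁻¹)⁻¹
    (rpow_nonneg (by linarith) _)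
    (by rw [rpow_neg_one]; exact qinv_lt hq)
  refine this.congr fun k => ?_
  rw [← qdenom_eq hq k, div_eq_mul_inv]

lemma qterm_cont (c : ℝ) (k : ℕ) :
    Continuous fun x : ℝ => q ^ (-(((k : ℝ) + 1) * (x + c))) / (1 - q ^ (-((k : ℝ) + 1))) := by
  have hq0 : (0:ℝ) < q := by linarith
  have h : ∀ x : ℝ, q ^ (-(((k : ℝ) + 1) * (x + c)))
      = Real.exp (Real.log q * (-(((k : ℝ) + 1) * (x + c)))) := fun x =>
    rpow_def_of_pos hq0 _
  simp only [h]
  fun_prop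

lemma qterm_le {x : ℝ} (hx : 1 ≤ x) (k : ℕ) :
    q ^ (-(((k : ℝ) + 1) * x)) / (1 - q ^ (-((k : ℝ) + 1)))
      ≤ q ^ (-((k : ℝ) + 1)) / (1 - q⁻¹) := by
  refine div_le_div₀ (by positivity) ?_ (by have := qinv_lt hq; linarith) (qdenom_ge hq k)
  rw [rpow_le_rpow_left_iff hq]
  have hk : (0:ℝ) ≤ (k:ℝ) := Nat.cast_nonneg k
  nlinarith

lemma qS_tendsto_one :
    Tendsto (fun x => qS q (x + 1)) (𝓝[>] (0:ℝ)) (𝓝 (qS q 1)) := by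
  have hq0 : (0:ℝ) < q := by linarith
  refine tendsto_tsum_of_dominated_convergence (f := fun x (k : ℕ) =>
      q ^ (-(((k : ℝ) + 1) * (x + 1))) / (1 - q ^ (-((k : ℝ) + 1))))
      (g := fun k : ℕ => q ^ (-(((k : ℝ) + 1) * 1)) / (1 - q ^ (-((k : ℝ) + 1))))
      (bound := fun k : ℕ => q ^ (-((k : ℝ) + 1)) / (1 - q⁻¹))
      (qbound_summable hq) (fun k => ?_) ?_
  · have := ((qterm_cont hq 1 k).tendsto 0).mono_left (nhdsWithin_le_nhds (s := Ioi (0:ℝ)))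
    simpa using this
  · filter_upwards [self_mem_nhdsWithin] with x hx k
    have hx0 : (0:ℝ) < x := hx
    have hpos : 0 ≤ q ^ (-(((k : ℝ) + 1) * (x + 1))) / (1 - q ^ (-((k : ℝ) + 1))) :=
      div_nonneg (rpow_nonneg hq0.le _) (qdenom_pos hq k).le
    rw [Real.norm_eq_abs, abs_of_nonneg hpos]
    exact qterm_le hq (by linarith) k

lemma qS_tendsto_atTop : Tendsto (fun x => qS q x) atTop (𝓝 0) := by
  have hq0 : (0:ℝ) < q := by linarith
  have h0 : (0:ℝ) = ∑' _k : ℕ, (0:ℝ) := by simp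
  rw [h0]
  refine tendsto_tsum_of_dominated_convergence (f := fun x (k : ℕ) =>
      q ^ (-(((k : ℝ) + 1) * x)) / (1 - q ^ (-((k : ℝ) + 1))))
      (g := fun _k : ℕ => (0:ℝ))
      (bound := fun k : ℕ => q ^ (-((k : ℝ) + 1)) / (1 - q⁻¹))
      (qbound_summable hq) (fun k => ?_) ?_
  · have hL : 0 < Real.log q := log_pos hq
    have h1 : Tendsto (fun x : ℝ => Real.log q * ((k : ℝ) + 1) * x) atTop atTop :=
      tendsto_id.const_mul_atTop (by positivity)
    have harg : Tendsto (fun x : ℝ => Real.log q * (-(((k : ℝ) + 1) * x))) atTop atBot := by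
      refine (tendsto_neg_atTop_atBot.comp h1).congr fun x => ?_
      simp only [Function.comp_apply]
      ring
    have hnum : Tendsto (fun x : ℝ => q ^ (-(((k : ℝ) + 1) * x))) atTop (𝓝 0) := by
      have h : ∀ x : ℝ, q ^ (-(((k : ℝ) + 1) * x))
          = Real.exp (Real.log q * (-(((k : ℝ) + 1) * x))) := fun x =>
        rpow_def_of_pos hq0 _
      simp only [h]
      exact tendsto_exp_atBot.comp harg
    simpa using hnum.div_const (1 - q ^ (-((k : ℝ) + 1)))
  · filter_upwards [eventually_ge_atTop (1:ℝ)] with x hx k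
    have hpos : 0 ≤ q ^ (-(((k : ℝ) + 1) * x)) / (1 - q ^ (-((k : ℝ) + 1))) :=
      div_nonneg (rpow_nonneg hq0.le _) (qdenom_pos hq k).le
    rw [Real.norm_eq_abs, abs_of_nonneg hpos]
    exact qterm_le hq (by linarith) k

end aux3

section main
variable {q : ℝ} (hq : 1 < q)
include hq

omit hq in
lemma qDig_eq (x : ℝ) :
    qDigammaGt q x = -Real.log (q - 1) + Real.log q * (x - 1 / 2 - qS q x) := rfl

omit hq in
lemma qrpow_cont (hq0 : 0 < q) : Continuous fun x : ℝ => q ^ x := by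
  have h : ∀ x : ℝ, q ^ x = Real.exp (Real.log q * x) := fun x => rpow_def_of_pos hq0 _
  simp only [h]; fun_prop

lemma qx_gt {x : ℝ} (hx : 0 < x) : 1 < q ^ x := by
  rw [one_lt_rpow_iff_of_pos (by linarith : (0:ℝ) < q)]
  exact Or.inl ⟨hq, hx⟩

lemma qt_atTop :
    Tendsto (fun x : ℝ => Real.log q / (q ^ x - 1)) (𝓝[>] (0:ℝ)) atTop := by
  have hq0 : (0:ℝ) < q := by linarith
  have hL : 0 < Real.log q := log_pos hq
  have hbase : Tendsto (fun x : ℝ => q ^ x - 1) (𝓝[>] (0:ℝ)) (𝓝[>] (0:ℝ)) := by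
    rw [tendsto_nhdsWithin_iff]
    constructor
    · have : Tendsto (fun x : ℝ => q ^ x - 1) (𝓝 0) (𝓝 (q ^ (0:ℝ) - 1)) :=
        ((qrpow_cont hq0).sub continuous_const).tendsto 0
      simp only [rpow_zero, sub_self] at this
      exact this.mono_left nhdsWithin_le_nhds
    · filter_upwards [self_mem_nhdsWithin] with x hx
      have := qx_gt hq (hx : (0:ℝ) < x)
      simpa [Set.mem_Ioi] using by linarith
  have hinv : Tendsto (fun x : ℝ => (q ^ x - 1)⁻¹) (𝓝[>] (0:ℝ)) atTop :=
    tendsto_inv_nhdsGT_zero.comp hbase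
  have := hinv.const_mul_atTop hL
  refine this.congr fun x => ?_
  rw [div_eq_mul_inv]

lemma qt_zero :
    Tendsto (fun x : ℝ => Real.log q / (q ^ x - 1)) atTop (𝓝[≠] (0:ℝ)) := by
  have hq0 : (0:ℝ) < q := by linarith
  have hL : 0 < Real.log q := log_pos hq
  have hbase : Tendsto (fun x : ℝ => q ^ x - 1) atTop atTop := by
    have h1 : Tendsto (fun x : ℝ => Real.log q * x) atTop atTop :=
      tendsto_id.const_mul_atTop hL
    have h2 : Tendsto (fun x : ℝ => q ^ x) atTop atTop := by
      have h : ∀ x : ℝ, q ^ x = Real.exp (Real.log q * x) := fun x => rpow_def_of_pos hq0 _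
      simp only [h]
      exact tendsto_exp_atTop.comp h1
    exact tendsto_atTop_add_const_right _ (-1) h2
  rw [tendsto_nhdsWithin_iff]
  constructor
  · exact tendsto_const_nhds.div_atTop hbase
  · filter_upwards [eventually_gt_atTop (0:ℝ)] with x hx
    have h1 := qx_gt hq hx
    have : 0 < Real.log q / (q ^ x - 1) := div_pos hL (by linarith)
    simpa using this.ne'

end main

section main2
variable {q : ℝ} (hq : 1 < q)
include hq

lemma qkey1 {x : ℝ} (hx : 0 < x) :
    qDigammaGt q x + Real.log (Real.exp (Real.log q / (q ^ x - 1)) - 1)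
      = qDigammaGt q (x + 1) - Real.log q
        + Real.log (1 - Real.exp (-(Real.log q / (q ^ x - 1)))) := by
  have hL : 0 < Real.log q := log_pos hq
  have hq1x := qx_gt hq hx
  set t := Real.log q / (q ^ x - 1) with htdef
  have ht : 0 < t := div_pos hL (by linarith)
  have he : 0 < 1 - Real.exp (-t) := by
    have : Real.exp (-t) < 1 := exp_lt_one_iff.mpr (by linarith)
    linarith
  have hlog : Real.log (Real.exp t - 1) = t + Real.log (1 - Real.exp (-t)) := by
    have h1 : Real.exp t - 1 = Real.exp t * (1 - Real.exp (-t)) := by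
      rw [exp_neg]
      field_simp
    rw [h1, log_mul (exp_ne_zero t) (ne_of_gt he), log_exp]
  have hshift : qDigammaGt q x
      = qDigammaGt q (x + 1) - Real.log q - Real.log q * (q ^ x - 1)⁻¹ := by
    rw [qDig_eq (q := q) x, qDig_eq (q := q) (x + 1), qS_shift hq hx]
    ring
  have htm : t = Real.log q * (q ^ x - 1)⁻¹ := by rw [htdef, div_eq_mul_inv]
  rw [hlog, hshift]
  linarith

lemma qlimit1 :
    Tendsto (fun x => qDigammaGt q x +
        Real.log (Real.exp (Real.log q / (q ^ x - 1)) - 1))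
      (𝓝[>] (0:ℝ)) (𝓝 (qDigammaGt q 1 - Real.log q)) := by
  have hA : Tendsto (fun x => qDigammaGt q (x + 1)) (𝓝[>] (0:ℝ))
      (𝓝 (qDigammaGt q 1)) := by
    have hx0 : Tendsto (fun x : ℝ => x) (𝓝[>] (0:ℝ)) (𝓝 0) :=
      (continuous_id.tendsto 0).mono_left nhdsWithin_le_nhds
    have h := (tendsto_const_nhds : Tendsto (fun _ : ℝ => -Real.log (q-1)) (𝓝[>] (0:ℝ))
        (𝓝 (-Real.log (q-1)))).add
      ((((hx0.add_const 1).sub_const (1/2)).sub (qS_tendsto_one hq)).const_mul (Real.log q))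
    have heq : qDigammaGt q 1
        = -Real.log (q-1) + Real.log q * ((0 + 1) - 1/2 - qS q 1) := by
      rw [qDig_eq (q := q) 1]; norm_num
    rw [heq]
    refine h.congr fun x => ?_
    rw [qDig_eq (q := q) (x + 1)]
  have hB : Tendsto (fun x => Real.log (1 - Real.exp (-(Real.log q / (q ^ x - 1)))))
      (𝓝[>] (0:ℝ)) (𝓝 0) := by
    have h1 : Tendsto (fun x : ℝ => Real.exp (-(Real.log q / (q ^ x - 1))))
        (𝓝[>] (0:ℝ)) (𝓝 0) :=
      tendsto_exp_atBot.comp (tendsto_neg_atTop_atBot.comp (qt_atTop hq))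
    have h2 : Tendsto (fun x : ℝ => 1 - Real.exp (-(Real.log q / (q ^ x - 1))))
        (𝓝[>] (0:ℝ)) (𝓝 1) := by
      simpa using tendsto_const_nhds.sub h1
    have h3 := ((Real.continuousAt_log one_ne_zero).tendsto).comp h2
    simpa [Function.comp_def] using h3
  have h := (hA.sub_const (Real.log q)).add hB
  rw [add_zero] at h
  refine h.congr' ?_
  filter_upwards [self_mem_nhdsWithin] with x hx
  exact (qkey1 hq hx).symm

end main2

section main3
variable {q : ℝ} (hq : 1 < q)
include hq

lemma qkey2 {x : ℝ} (hx : 0 < x) :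
    qDigammaGt q x + Real.log (Real.exp (Real.log q / (q ^ x - 1)) - 1)
      = (Real.log (Real.log q / (q - 1)) - Real.log q / 2)
        + (-Real.log q * qS q x) + (-Real.log (1 - q ^ (-x)))
        + Real.log ((Real.exp (Real.log q / (q ^ x - 1)) - 1)
            / (Real.log q / (q ^ x - 1))) := by
  have hq0 : (0:ℝ) < q := by linarith
  have hL : 0 < Real.log q := log_pos hq
  have hq1x := qx_gt hq hx
  set t := Real.log q / (q ^ x - 1) with htdef
  have ht : 0 < t := div_pos hL (by linarith)
  have het : 0 < Real.exp t - 1 := by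
    have : (1:ℝ) = Real.exp 0 := (Real.exp_zero).symm
    have h2 : Real.exp 0 < Real.exp t := exp_lt_exp.mpr ht
    rw [Real.exp_zero] at h2
    linarith
  have h1 : Real.log ((Real.exp t - 1) / t)
      = Real.log (Real.exp t - 1) - Real.log t := log_div (ne_of_gt het) (ne_of_gt ht)
  have h2 : Real.log t = Real.log (Real.log q) - Real.log (q ^ x - 1) := by
    rw [htdef, log_div (ne_of_gt hL) (by linarith : q ^ x - 1 ≠ 0)]
  have h3 : Real.log (1 - q ^ (-x))
      = Real.log (q ^ x - 1) - x * Real.log q := by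
    have hne : q ^ x ≠ 0 := by positivity
    have he : 1 - q ^ (-x) = (q ^ x - 1) / q ^ x := by
      rw [rpow_neg hq0.le]
      field_simp
    rw [he, log_div (by linarith : q ^ x - 1 ≠ 0) hne, log_rpow hq0]
  have h4 : Real.log (Real.log q / (q - 1))
      = Real.log (Real.log q) - Real.log (q - 1) :=
    log_div (ne_of_gt hL) (by linarith : q - 1 ≠ 0)
  rw [qDig_eq (q := q) x, h1, h2, h3, h4]
  ring

lemma qlimit2 :
    Tendsto (fun x => qDigammaGt q x +
        Real.log (Real.exp (Real.log q / (q ^ x - 1)) - 1))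
      atTop (𝓝 (Real.log (Real.log q / (q - 1)) - Real.log q / 2)) := by
  have hq0 : (0:ℝ) < q := by linarith
  have hL : 0 < Real.log q := log_pos hq
  have hA : Tendsto (fun x => -Real.log q * qS q x) atTop (𝓝 0) := by
    simpa using (qS_tendsto_atTop hq).const_mul (-Real.log q)
  have hB : Tendsto (fun x : ℝ => -Real.log (1 - q ^ (-x))) atTop (𝓝 0) := by
    have h1 : Tendsto (fun x : ℝ => q ^ (-x)) atTop (𝓝 0) := by
      have h : ∀ x : ℝ, q ^ (-x) = Real.exp (Real.log q * (-x)) := fun x =>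
        rpow_def_of_pos hq0 _
      simp only [h]
      refine tendsto_exp_atBot.comp ?_
      have := (tendsto_id.const_mul_atTop hL : Tendsto (fun x : ℝ => Real.log q * x) atTop atTop)
      refine (tendsto_neg_atTop_atBot.comp this).congr fun x => ?_
      simp only [Function.comp_apply]; ring
    have h2 : Tendsto (fun x : ℝ => 1 - q ^ (-x)) atTop (𝓝 1) := by
      simpa using tendsto_const_nhds.sub h1
    have h3 := ((Real.continuousAt_log one_ne_zero).tendsto).comp h2
    simp only [Function.comp_apply, Real.log_one] at h3
    simpa using h3.neg
  have hC : Tendsto (fun x : ℝ => Real.log ((Real.exp (Real.log q / (q ^ x - 1)) - 1)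
      / (Real.log q / (q ^ x - 1)))) atTop (𝓝 0) := by
    have hslope : Tendsto (fun u : ℝ => (Real.exp u - 1) / u) (𝓝[≠] (0:ℝ)) (𝓝 1) := by
      have h := hasDerivAt_iff_tendsto_slope.mp (Real.hasDerivAt_exp 0)
      simp only [slope_fun_def, Real.exp_zero, sub_zero] at h
      refine h.congr fun u => ?_
      simp [div_eq_inv_mul, vsub_eq_sub]
    have h1 := hslope.comp (qt_zero hq)
    have h2 := ((Real.continuousAt_log one_ne_zero).tendsto).comp h1
    simp only [Function.comp_apply, Real.log_one] at h2
    exact h2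
  have h := ((tendsto_const_nhds : Tendsto
      (fun _ : ℝ => Real.log (Real.log q / (q - 1)) - Real.log q / 2) atTop
      (𝓝 (Real.log (Real.log q / (q - 1)) - Real.log q / 2))).add hA).add hB |>.add hC
  simp only [add_zero] at h
  refine h.congr' ?_
  filter_upwards [eventually_gt_atTop (0:ℝ)] with x hx
  exact (qkey2 hq hx).symm

end main3

/-- For `q > 1`, `φ̃_q(x) → ψ_q(1) − ln q` as `x → 0⁺` and
`φ̃_q(x) → ln(ln q/(q−1)) − (ln q)/2` as `x → ∞`; consequently, the constants
`ψ_q(1) − ln q` and `ln(ln q/(q−1)) − (ln q)/2` in the double inequality are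
best possible. -/
theorem varphi_limits_best_possible (q : ℝ) (hq : 1 < q) :
    Tendsto
      (fun x => qDigammaGt q x +
        Real.log (Real.exp (Real.log q / (q ^ x - 1)) - 1))
      (𝓝[>] 0) (𝓝 (qDigammaGt q 1 - Real.log q)) ∧
    Tendsto
      (fun x => qDigammaGt q x +
        Real.log (Real.exp (Real.log q / (q ^ x - 1)) - 1))
      atTop (𝓝 (Real.log (Real.log q / (q - 1)) - Real.log q / 2)) ∧
    (∀ a : ℝ,
      (∀ x : ℝ, 0 < x →
        a - Real.log (Real.exp (Real.log q / (q ^ x - 1)) - 1) < qDigammaGt q x) →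
      a ≤ qDigammaGt q 1 - Real.log q) ∧
    (∀ b : ℝ,
      (∀ x : ℝ, 0 < x →
        qDigammaGt q x <
          b - Real.log (Real.exp (Real.log q / (q ^ x - 1)) - 1)) →
      Real.log (Real.log q / (q - 1)) - Real.log q / 2 ≤ b) := by
  refine ⟨qlimit1 hq, qlimit2 hq, fun a ha => ?_, fun b hb => ?_⟩
  · refine ge_of_tendsto (qlimit1 hq) ?_
    filter_upwards [self_mem_nhdsWithin] with x hx
    have := ha x hx
    linarith
  · refine le_of_tendsto (qlimit2 hq) ?_
    filter_upwards [eventually_gt_atTop (0:ℝ)] with x hx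
    have := hb x hx
    linarith
end
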